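/- Let N, m, p, q ≥ 1, let A_K ∈ ℝ^{N×N}, K ∈ ℝ^{m×N}, B_w ∈ ℝ^{N×p}, C_K ∈ ℝ^{q×N}, D_w ∈ ℝ^{q×p}, S_w ∈ ℝ^{p×q}; let P ∈ ℝ^{N×N} be symmetric positive definite, Q_w ∈ ℝ^{p×p} symmetric, R_w ∈ ℝ^{q×q} symmetric positive semidefinite, and let ρ ≥ 0, η ≥ 0, τ > 0, λ > 0, c_x > 0, c_u > 0 be real numbers. Define H_w = Q_w + S_w·D_w + D_wᵀ·S_wᵀ, and assume that the symmetric matrix M + Eᵀ·Δ·E is negative semidefinite, where M is the symmetric block matrix [[P⁻¹·A_K + A_Kᵀ·P⁻¹ + ρ·P⁻², P⁻¹, P⁻¹·B_w + (1/λ)·C_Kᵀ·S_wᵀ], [P⁻¹, −(1/τ)·I_N, 0], [B_wᵀ·P⁻¹ + (1/λ)·S_w·C_K, 0, (1/λ)·H_w + (η/λ²)·I_p]] (block sizes N, N, p), E is the block matrix [[I_N, 0, 0], [K, 0, 0], [C_K, 0, D_w]] (block row sizes N, m, q; block column sizes N, N, p), and Δ = blkdiag((2c_x²/τ)·I_N,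 (2c_u²/τ)·I_m, (1/λ)·R_w). Then for every z ∈ ℝ^N, every r ∈ ℝ^N with ‖r‖² ≤ 2c_x²‖z‖² + 2c_u²‖K z‖², and every w ∈ ℝ^p, setting y = C_K·z + D_w·w, it holds that 2·zᵀP⁻¹(A_K·z + r + B_w·w) ≤ −ρ·zᵀP⁻²z − (η/λ²)·‖w‖² − (1/λ)·(wᵀQ_w w + 2·wᵀS_w y + yᵀR_w y). -/

import Mathlib

open Matrix

/-- The Euclidean norm of a vector in `ℝ^k`. -/
noncomputable def enorm' {k : ℕ} (v : Fin k → ℝ) : ℝ :=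
  ‖(EuclideanSpace.equiv (Fin k) ℝ).symm v‖

/-- A real matrix is negative semidefinite if it is symmetric (Hermitian) and its
quadratic form is nonpositive. -/
def NegSemidef {k : Type*} [Fintype k] (M : Matrix k k ℝ) : Prop :=
  M.IsHermitian ∧ ∀ v : k → ℝ, v ⬝ᵥ M.mulVec v ≤ 0

/-- A 3×3 block matrix with block row sizes `α`, `β`, `γ` and
block column sizes `α'`, `β'`, `γ'`. -/
def blk33 {α β γ α' β' γ' : Type*}
    (A11 : Matrix α α' ℝ) (A12 : Matrix α β' ℝ) (A13 : Matrix α γ' ℝ)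
    (A21 : Matrix β α' ℝ) (A22 : Matrix β β' ℝ) (A23 : Matrix β γ' ℝ)
    (A31 : Matrix γ α' ℝ) (A32 : Matrix γ β' ℝ) (A33 : Matrix γ γ' ℝ) :
    Matrix ((α ⊕ β) ⊕ γ) ((α' ⊕ β') ⊕ γ') ℝ :=
  Matrix.fromBlocks (Matrix.fromBlocks A11 A12 A21 A22) (Matrix.fromRows A13 A23)
    (Matrix.fromCols A31 A32) A33

lemma enorm_sq {k : ℕ} (v : Fin k → ℝ) : enorm' v ^ 2 = v ⬝ᵥ v := by
  simp [enorm', EuclideanSpace.norm_eq, dotProduct]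
  rw [Real.sq_sqrt (by positivity)]
  simp [pow_two]

lemma sum_elim_add {α β : Type*} (u v : α → ℝ) (x y : β → ℝ) :
    Sum.elim u x + Sum.elim v y = Sum.elim (u + v) (x + y) := by
  ext i; cases i <;> simp

lemma quad33 {α β γ : Type*} [Fintype α] [Fintype β] [Fintype γ]
    (A11 : Matrix α α ℝ) (A12 : Matrix α β ℝ) (A13 : Matrix α γ ℝ)
    (A21 : Matrix β α ℝ) (A22 : Matrix β β ℝ) (A23 : Matrix β γ ℝ)
    (A31 : Matrix γ α ℝ) (A32 : Matrix γ β ℝ) (A33 : Matrix γ γ ℝ)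
    (a : α → ℝ) (b : β → ℝ) (c : γ → ℝ) :
    Sum.elim (Sum.elim a b) c ⬝ᵥ
      (blk33 A11 A12 A13 A21 A22 A23 A31 A32 A33).mulVec (Sum.elim (Sum.elim a b) c) =
    a ⬝ᵥ A11.mulVec a + a ⬝ᵥ A12.mulVec b + a ⬝ᵥ A13.mulVec c +
    b ⬝ᵥ A21.mulVec a + b ⬝ᵥ A22.mulVec b + b ⬝ᵥ A23.mulVec c +
    c ⬝ᵥ A31.mulVec a + c ⬝ᵥ A32.mulVec b + c ⬝ᵥ A33.mulVec c := by
  simp [blk33, Matrix.fromBlocks_mulVec, Matrix.fromRows_mulVec,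
    Matrix.fromCols_mulVec_sumElim, sum_elim_add,
    sumElim_dotProduct_sumElim, dotProduct_add]
  ring

lemma dp_transpose {α β : Type*} [Fintype α] [Fintype β]
    (A : Matrix α β ℝ) (u : α → ℝ) (v : β → ℝ) :
    u ⬝ᵥ A.mulVec v = Aᵀ.mulVec u ⬝ᵥ v := by
  rw [Matrix.dotProduct_mulVec, ← Matrix.vecMul_transpose, Matrix.transpose_transpose]


theorem stmt6 (N m p q : ℕ) (hN : 1 ≤ N) (hm : 1 ≤ m) (hp : 1 ≤ p) (hq : 1 ≤ q)
    (AK : Matrix (Fin N) (Fin N) ℝ) (K : Matrix (Fin m) (Fin N) ℝ)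
    (Bw : Matrix (Fin N) (Fin p) ℝ) (CK : Matrix (Fin q) (Fin N) ℝ)
    (Dw : Matrix (Fin q) (Fin p) ℝ) (Sw : Matrix (Fin p) (Fin q) ℝ)
    (P : Matrix (Fin N) (Fin N) ℝ) (hP : P.PosDef)
    (Qw : Matrix (Fin p) (Fin p) ℝ) (hQw : Qw.IsHermitian)
    (Rw : Matrix (Fin q) (Fin q) ℝ) (hRw : Rw.PosSemidef)
    (ρ η τ lam cx cu : ℝ) (hρ : 0 ≤ ρ) (hη : 0 ≤ η) (hτ : 0 < τ) (hlam : 0 < lam)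
    (hcx : 0 < cx) (hcu : 0 < cu)
    (Hw : Matrix (Fin p) (Fin p) ℝ) (hHw : Hw = Qw + Sw * Dw + Dwᵀ * Swᵀ)
    (hLMI : NegSemidef
      ((blk33
        (P⁻¹ * AK + AKᵀ * P⁻¹ + ρ • (P⁻¹ * P⁻¹)) P⁻¹ (P⁻¹ * Bw + (1 / lam) • (CKᵀ * Swᵀ))
        P⁻¹ ((-(1 / τ)) • (1 : Matrix (Fin N) (Fin N) ℝ)) 0
        (Bwᵀ * P⁻¹ + (1 / lam) • (Sw * CK)) 0
          ((1 / lam) • Hw + (η / lam ^ 2) • (1 : Matrix (Fin p) (Fin p) ℝ))) +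
      (blk33
        (1 : Matrix (Fin N) (Fin N) ℝ) 0 0
        K 0 0
        CK 0 Dw)ᵀ *
      (blk33
        ((2 * cx ^ 2 / τ) • (1 : Matrix (Fin N) (Fin N) ℝ)) 0 0
        0 ((2 * cu ^ 2 / τ) • (1 : Matrix (Fin m) (Fin m) ℝ)) 0
        0 0 ((1 / lam) • Rw)) *
      (blk33
        (1 : Matrix (Fin N) (Fin N) ℝ) 0 0
        K 0 0
        CK 0 Dw))) :
    ∀ (z r : Fin N → ℝ) (w : Fin p → ℝ),
      enorm' r ^ 2 ≤ 2 * cx ^ 2 * enorm' z ^ 2 + 2 * cu ^ 2 * enorm' (K.mulVec z) ^ 2 →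
      ∀ y : Fin q → ℝ, y = CK.mulVec z + Dw.mulVec w →
        2 * (z ⬝ᵥ (P⁻¹).mulVec (AK.mulVec z + r + Bw.mulVec w)) ≤
          -ρ * (z ⬝ᵥ (P⁻¹ * P⁻¹).mulVec z) - (η / lam ^ 2) * enorm' w ^ 2 -
            (1 / lam) * (w ⬝ᵥ Qw.mulVec w + 2 * (w ⬝ᵥ Sw.mulVec y) + y ⬝ᵥ Rw.mulVec y) := by
  intro z r w hres y hy
  have hv := hLMI.2 (Sum.elim (Sum.elim z r) w)
  rw [Matrix.add_mulVec, dotProduct_add, quad33] at hv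
  set E : Matrix ((Fin N ⊕ Fin m) ⊕ Fin q) ((Fin N ⊕ Fin N) ⊕ Fin p) ℝ :=
    blk33 (1 : Matrix (Fin N) (Fin N) ℝ) 0 0 K 0 0 CK 0 Dw with hEdef
  have hEv : E.mulVec (Sum.elim (Sum.elim z r) w) =
      Sum.elim (Sum.elim z (K.mulVec z)) (CK.mulVec z + Dw.mulVec w) := by
    simp [hEdef, blk33, Matrix.fromBlocks_mulVec, Matrix.fromRows_mulVec,
      Matrix.fromCols_mulVec_sumElim, sum_elim_add]
  have hquad : ∀ (Δ : Matrix ((Fin N ⊕ Fin m) ⊕ Fin q) ((Fin N ⊕ Fin m) ⊕ Fin q) ℝ)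
      (u : (Fin N ⊕ Fin N) ⊕ Fin p → ℝ),
      u ⬝ᵥ (Eᵀ * Δ * E).mulVec u = E.mulVec u ⬝ᵥ Δ.mulVec (E.mulVec u) := by
    intro Δ u
    rw [← Matrix.mulVec_mulVec, ← Matrix.mulVec_mulVec, Matrix.dotProduct_mulVec,
      Matrix.vecMul_transpose]
  rw [hquad, hEv, quad33] at hv
  subst hy hHw
  have hPt : (P⁻¹)ᵀ = P⁻¹ := by
    rw [← Matrix.conjTranspose_eq_transpose_of_trivial]; exact hP.isHermitian.inv.eq
  simp only [Matrix.add_mulVec, Matrix.smul_mulVec, Matrix.one_mulVec,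
    Matrix.zero_mulVec, dotProduct_zero, dotProduct_add,
    dotProduct_smul, smul_eq_mul, ← Matrix.mulVec_mulVec, Matrix.mulVec_add,
    neg_smul, Matrix.neg_mulVec, dotProduct_neg] at hv ⊢
  have h1 : z ⬝ᵥ AKᵀ *ᵥ (P⁻¹ *ᵥ z) = z ⬝ᵥ P⁻¹ *ᵥ (AK *ᵥ z) := by
    rw [dp_transpose AKᵀ, Matrix.transpose_transpose, dotProduct_comm,
      dp_transpose P⁻¹, hPt, dotProduct_comm]
  have h2 : r ⬝ᵥ P⁻¹ *ᵥ z = z ⬝ᵥ P⁻¹ *ᵥ r := by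
    rw [dp_transpose P⁻¹, hPt, dotProduct_comm]
  have h3 : w ⬝ᵥ Bwᵀ *ᵥ (P⁻¹ *ᵥ z) = z ⬝ᵥ P⁻¹ *ᵥ (Bw *ᵥ w) := by
    rw [dp_transpose Bwᵀ, Matrix.transpose_transpose, dotProduct_comm,
      dp_transpose P⁻¹, hPt, dotProduct_comm]
  have h4 : z ⬝ᵥ CKᵀ *ᵥ (Swᵀ *ᵥ w) = w ⬝ᵥ Sw *ᵥ (CK *ᵥ z) := by
    rw [dp_transpose CKᵀ, Matrix.transpose_transpose, dp_transpose Swᵀ,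
      Matrix.transpose_transpose, dotProduct_comm]
  have h5 : w ⬝ᵥ Dwᵀ *ᵥ (Swᵀ *ᵥ w) = w ⬝ᵥ Sw *ᵥ (Dw *ᵥ w) := by
    rw [dp_transpose Dwᵀ, Matrix.transpose_transpose, dp_transpose Swᵀ,
      Matrix.transpose_transpose, dotProduct_comm]
  rw [enorm_sq] at hres
  rw [enorm_sq, enorm_sq] at hres
  rw [enorm_sq]
  have hτ2 : 0 ≤ (1 / τ) * (2 * cx ^ 2 * (z ⬝ᵥ z) + 2 * cu ^ 2 * (K *ᵥ z ⬝ᵥ K *ᵥ z) - r ⬝ᵥ r) :=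
    mul_nonneg (by positivity) (by linarith)
  rw [h1, h2, h3, h4, h5] at hv
  ring_nf at hv hτ2 ⊢
  linarith [hv, hτ2]
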